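/- Let T_{p₁,…,p_ℓ} and T_{p'₁,…,p'_ℓ} be ℓ-dimensional torus CCs with p_j ≥ 3 and p'_j ≥ 3 for all j. Then the map on cells induced by coordinatewise reduction of nodes modulo (p₁,…,p_ℓ) is a CC covering of T_{p₁,…,p_ℓ} by T_{p₁p'₁,…,p_ℓp'_ℓ}, and similarly the map induced by coordinatewise reduction modulo (p'₁,…,p'_ℓ) is a CC covering of T_{p'₁,…,p'_ℓ} by T_{p₁p'₁,…,p_ℓp'_ℓ}. -/

import Mathlib

/-! Basic framework: combinatorial complexes, natural neighborhood functions,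
CC coverings, Hasse graphs, and higher-order message-passing (HOMP) models. -/

namespace TDL

/-- The raw data of a combinatorial complex over an ambient node type `S`:
a set of cells (finite, nonempty subsets of nodes) and a rank function. -/
structure PreCC (S : Type*) where
  cells : Set (Finset S)
  rk : Finset S → ℕ

/-- A (featureless) combinatorial complex.  The node set is implicitly the set of
elements appearing in cells; every singleton of such a node is a cell of rank `0`,
cells are nonempty, there are finitely many cells, and the rank function is
monotone with respect to inclusion. -/
structure CC (S : Type*) extends PreCC S where
  cells_finite : cells.Finite
  nonempty_of_mem : ∀ x ∈ cells, x.Nonempty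
  singleton_mem : ∀ x ∈ cells, ∀ s ∈ x, ({s} : Finset S) ∈ cells
  rk_singleton : ∀ s : S, ({s} : Finset S) ∈ cells → rk {s} = 0
  rk_mono : ∀ x ∈ cells, ∀ y ∈ cells, x ⊆ y → rk x ≤ rk y

/-- Names of the natural neighborhood functions: `(r₁,r₂)`-adjacency,
coadjacency, incidence and co-incidence. -/
inductive NbhdKind : Type
  | adj (r₁ r₂ : ℕ)
  | coadj (r₁ r₂ : ℕ)
  | inc (r₁ r₂ : ℕ)
  | coinc (r₁ r₂ : ℕ)
  deriving DecidableEq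

/-- The two ranks mentioned by a neighborhood kind are bounded by `ℓ`. -/
def NbhdKind.bounded (ℓ : ℕ) : NbhdKind → Prop
  | .adj r₁ r₂ => r₁ ≤ ℓ ∧ r₂ ≤ ℓ
  | .coadj r₁ r₂ => r₁ ≤ ℓ ∧ r₂ ≤ ℓ
  | .inc r₁ r₂ => r₁ ≤ ℓ ∧ r₂ ≤ ℓ
  | .coinc r₁ r₂ => r₁ ≤ ℓ ∧ r₂ ≤ ℓ

namespace PreCC

variable {S : Type*}

/-- The `r`-skeleton: the set of cells of rank `r`. -/
def skel (X : PreCC S) (r : ℕ) : Set (Finset S) := {x | x ∈ X.cells ∧ X.rk x = r}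

/-- The natural neighborhood functions of a complex. -/
def nbhd (X : PreCC S) : NbhdKind → Finset S → Set (Finset S)
  | .adj r₁ r₂, x => {y | x ∈ X.skel r₁ ∧ y ∈ X.skel r₁ ∧ ∃ z ∈ X.skel r₂, x ⊆ z ∧ y ⊆ z}
  | .coadj r₁ r₂, x => {y | x ∈ X.skel r₁ ∧ y ∈ X.skel r₁ ∧ ∃ z ∈ X.skel r₂, z ⊆ x ∧ z ⊆ y}
  | .inc r₁ r₂, x => {y | x ∈ X.skel r₁ ∧ y ∈ X.skel r₂ ∧ x ⊆ y}
  | .coinc r₁ r₂, x => {y | x ∈ X.skel r₁ ∧ y ∈ X.skel r₂ ∧ y ⊆ x}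

/-- The Hasse graph of a complex: vertices are cells, and `x, y` are joined by an
edge whenever `x ⊆ y` and `rk x = rk y - 1` (or symmetrically). -/
def hasse (X : PreCC S) : SimpleGraph {x : Finset S // x ∈ X.cells} where
  Adj a b := (a.1 ⊆ b.1 ∧ X.rk a.1 + 1 = X.rk b.1) ∨ (b.1 ⊆ a.1 ∧ X.rk b.1 + 1 = X.rk a.1)
  symm := by
    constructor
    rintro a b (h | h)
    · exact Or.inr h
    · exact Or.inl h
  loopless := by constructor <;> rintro a (⟨-, h⟩ | ⟨-, h⟩) <;> omega

end PreCC

/-- `ρ` is a CC covering of `X` by `Xt`: it maps cells of `Xt` to cells of `X`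
surjectively, preserves ranks, and is a local isomorphism with respect to every
natural neighborhood function. -/
structure IsCovering {S' S : Type*} (Xt : PreCC S') (X : PreCC S)
    (ρ : Finset S' → Finset S) : Prop where
  mem : ∀ x' ∈ Xt.cells, ρ x' ∈ X.cells
  surj : ∀ x ∈ X.cells, ∃ x' ∈ Xt.cells, ρ x' = x
  rank : ∀ x' ∈ Xt.cells, X.rk (ρ x') = Xt.rk x'
  locBij : ∀ x' ∈ Xt.cells, ∀ N : NbhdKind, Set.BijOn ρ (Xt.nbhd N x') (X.nbhd N (ρ x'))

open Classical in
/-- The multiset underlying a finite set (junk value `0` for infinite sets). -/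
noncomputable def setMultiset {α : Type*} (s : Set α) : Multiset α :=
  if h : s.Finite then h.toFinset.val else 0

/-- A higher-order message-passing (HOMP) model over a feature space `D`, for
featureless complexes of dimension at most `ℓ`: a number of layers `T`, an initial
constant feature, and, per layer, message functions (per neighborhood function and
rank), permutation-invariant aggregations (functions of multisets), a combination
operator over the family of neighborhood functions with ranks at most `ℓ`,
activations, and a readout defined on multisets. -/
structure HOMP (D : Type*) (ℓ : ℕ) where
  T : ℕ
  init : D
  msg : ℕ → NbhdKind → ℕ → D → D → D
  agg : ℕ → NbhdKind → Multiset D → D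
  comb : ℕ → ({N : NbhdKind // N.bounded ℓ} → D) → D
  act : ℕ → D → D
  readout : Multiset D → D

namespace HOMP

variable {D : Type*} {ℓ : ℕ} {S : Type*}

/-- The cell feature maps computed by a HOMP model on a complex:
`h⁰_x` is the initial constant, and
`h^{t+1}_x = β_t (⊗_N (⊕ {{ m_{t,N,rk x}(h^t_x, h^t_y) : y ∈ N(x) }}))`. -/
noncomputable def feat (M : HOMP D ℓ) (X : PreCC S) : ℕ → Finset S → D
  | 0, _ => M.init
  | t + 1, x =>
      M.act t <| M.comb t fun N =>
        M.agg t N.1 <|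
          (setMultiset (X.nbhd N.1 x)).map fun y =>
            M.msg t N.1 (X.rk x) (M.feat X t x) (M.feat X t y)

/-- The output of a HOMP model: the readout of the multiset of final features. -/
noncomputable def out (M : HOMP D ℓ) (X : PreCC S) : D :=
  M.readout <| (setMultiset X.cells).map fun x => M.feat X M.T x

end HOMP

end TDL

namespace TDL

/-- The cell `s_k` of the `ℓ`-dimensional torus: the set of nodes `s + k'` for
`k' ≤ k`, with coordinatewise addition modulo `p j`. -/
def torusCell {ℓ : ℕ} (p : Fin ℓ → ℕ) (s : ∀ i, ZMod (p i)) (k : Fin ℓ → Bool) :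
    Finset (∀ i, ZMod (p i)) :=
  (Finset.univ.filter fun k' : Fin ℓ → Bool => ∀ i, k' i = true → k i = true).image
    fun k' i => s i + if k' i then 1 else 0

/-- The number of ones in `k ∈ {0,1}^ℓ`, i.e. the rank of the cell `s_k`. -/
def torusRank {ℓ : ℕ} (k : Fin ℓ → Bool) : ℕ :=
  (Finset.univ.filter fun i => k i = true).card

/-- The `ℓ`-dimensional torus combinatorial complex `T_{p₁,…,p_ℓ}`: nodes are
`ℤ/p₁ × ⋯ × ℤ/p_ℓ`, cells are the sets `s_k`, and the rank of `s_k` is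
`k₁ + ⋯ + k_ℓ`. -/
noncomputable def torusPre {ℓ : ℕ} (p : Fin ℓ → ℕ) : PreCC (∀ i, ZMod (p i)) where
  cells := {x | ∃ s k, x = torusCell p s k}
  rk x := sInf {r | ∃ s k, x = torusCell p s k ∧ r = torusRank k}

end TDL

namespace TDL
namespace TorusAux

/-- Bool to integer indicator. -/
def bz (b : Bool) : ℤ := if b then 1 else 0

lemma bz_cases (b : Bool) : bz b = 0 ∨ bz b = 1 := by cases b <;> simp [bz]

lemma ite_eq_bz {n : ℕ} (b : Bool) : (if b then (1 : ZMod n) else 0) = ((bz b : ℤ) : ZMod n) := by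
  cases b <;> simp [bz]

lemma intCast_inj {n : ℕ} {a b : ℤ} (h : ((a : ZMod n)) = b) (hab : |a - b| < n) : a = b := by
  have h2 := (ZMod.intCast_eq_intCast_iff a b n).mp h
  have h3 := h2.dvd
  have h4 := Int.eq_zero_of_abs_lt_dvd h3 (by rwa [abs_sub_comm])
  omega

variable {ℓ : ℕ} {q : Fin ℓ → ℕ}

lemma mem_torusCell {s a : ∀ i, ZMod (q i)} {k : Fin ℓ → Bool} :
    a ∈ torusCell q s k ↔ ∃ k' : Fin ℓ → Bool,
      (∀ i, k' i = true → k i = true) ∧ ∀ i, a i = s i + ((bz (k' i) : ℤ) : ZMod (q i)) := by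
  simp only [torusCell, Finset.mem_image, Finset.mem_filter, Finset.mem_univ, true_and]
  constructor
  · rintro ⟨k', h1, h2⟩
    refine ⟨k', h1, fun i => ?_⟩
    rw [← congrFun h2 i, ite_eq_bz]
  · rintro ⟨k', h1, h2⟩
    refine ⟨k', h1, funext fun i => ?_⟩
    rw [ite_eq_bz]
    exact (h2 i).symm

lemma self_mem_torusCell (s : ∀ i, ZMod (q i)) (k : Fin ℓ → Bool) : s ∈ torusCell q s k :=
  mem_torusCell.mpr ⟨fun _ => false, by simp, fun i => by simp [bz]⟩

lemma torusCell_subset (hq : ∀ i, 3 ≤ q i) {s t : ∀ i, ZMod (q i)} {k m : Fin ℓ → Bool} :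
    torusCell q s k ⊆ torusCell q t m ↔ ∃ δ : Fin ℓ → Bool,
      (∀ i, δ i = true → m i = true) ∧
      (∀ i, k i = true → δ i = false ∧ m i = true) ∧
      (∀ i, s i = t i + ((bz (δ i) : ℤ) : ZMod (q i))) := by
  constructor
  · intro h
    obtain ⟨δ, hδm, hδ⟩ := mem_torusCell.mp (h (self_mem_torusCell s k))
    refine ⟨δ, hδm, fun i hki => ?_, hδ⟩
    -- consider the element s + e_i
    have hei : (fun j => s j + ((bz (decide (j = i)) : ℤ) : ZMod (q j))) ∈ torusCell q s k :=
      mem_torusCell.mpr ⟨fun j => decide (j = i), by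
        intro j hj
        simp only [decide_eq_true_eq] at hj
        subst hj; exact hki, fun j => rfl⟩
    obtain ⟨ε, hεm, hε⟩ := mem_torusCell.mp (h hei)
    have hii := hε i
    rw [show (decide (i = i)) = true by simp, show bz true = 1 from rfl] at hii
    push_cast at hii
    have key : ((bz (δ i) + 1 : ℤ) : ZMod (q i)) = ((bz (ε i) : ℤ) : ZMod (q i)) := by
      push_cast
      linear_combination hii - hδ i
    have key2 : bz (δ i) + 1 = bz (ε i) := by
      refine intCast_inj key ?_
      have := hq i
      rcases bz_cases (δ i) with h1 | h1 <;> rcases bz_cases (ε i) with h2 | h2 <;>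
        rw [h1, h2] <;> simp <;> omega
    have hδε : δ i = false ∧ ε i = true := by
      cases hδc : δ i <;> cases hεc : ε i <;> rw [hδc, hεc] at key2 <;>
        simp [bz] at key2 ⊢ <;> omega
    exact ⟨hδε.1, hεm i hδε.2⟩
  · rintro ⟨δ, hδm, hkm, hδ⟩ a ha
    obtain ⟨k', hk', ha⟩ := mem_torusCell.mp ha
    refine mem_torusCell.mpr ⟨fun i => δ i || k' i, ?_, fun i => ?_⟩
    · intro i hi
      rcases Bool.or_eq_true_iff.mp hi with h | h
      · exact hδm i h
      · exact (hkm i (hk' i h)).2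
    · have hbz : (bz (δ i) : ℤ) + bz (k' i) = bz (δ i || k' i) := by
        cases hδi : δ i
        · cases hki : k' i <;> simp [bz]
        · cases hki : k' i
          · simp [bz]
          · exact absurd ((hkm i (hk' i hki)).1) (by rw [hδi]; simp)
      rw [ha i, hδ i, ← hbz]
      push_cast
      ring

end TorusAux
end TDL

namespace TDL
namespace TorusAux

variable {ℓ : ℕ} {q : Fin ℓ → ℕ}

lemma torusCell_inj (hq : ∀ i, 3 ≤ q i) {s t : ∀ i, ZMod (q i)} {k m : Fin ℓ → Bool} :
    torusCell q s k = torusCell q t m ↔ s = t ∧ k = m := by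
  constructor
  · intro h
    obtain ⟨δ, hδm, hkδ, hδ⟩ := (torusCell_subset hq).mp h.le
    obtain ⟨ε, hεk, hmε, hε⟩ := (torusCell_subset hq).mp h.symm.le
    have hst : ∀ i, δ i = false ∧ ε i = false := by
      intro i
      have key : ((bz (ε i) + bz (δ i) : ℤ) : ZMod (q i)) = ((0 : ℤ) : ZMod (q i)) := by
        push_cast
        linear_combination - hδ i - hε i
      have key2 : bz (ε i) + bz (δ i) = 0 := by
        refine intCast_inj key ?_
        have := hq i
        rcases bz_cases (δ i) with h1 | h1 <;> rcases bz_cases (ε i) with h2 | h2 <;>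
          rw [h1, h2] <;> simp <;> omega
      cases hδc : δ i <;> cases hεc : ε i <;> rw [hδc, hεc] at key2 <;>
        simp [bz] at key2 ⊢
    constructor
    · funext i
      rw [hδ i, (hst i).1]
      simp [bz]
    · funext i
      cases hk : k i <;> cases hm : m i
      · rfl
      · exact absurd (hmε i hm).2 (by rw [hk]; exact Bool.false_ne_true)
      · exact absurd (hkδ i hk).2 (by rw [hm]; exact Bool.false_ne_true)
      · rfl
  · rintro ⟨rfl, rfl⟩; rfl

lemma rk_torusCell (hq : ∀ i, 3 ≤ q i) (s : ∀ i, ZMod (q i)) (k : Fin ℓ → Bool) :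
    (torusPre q).rk (torusCell q s k) = torusRank k := by
  have hset : {r | ∃ s' k', torusCell q s k = torusCell q s' k' ∧ r = torusRank k'}
      = {torusRank k} := by
    ext r
    simp only [Set.mem_setOf_eq, Set.mem_singleton_iff]
    constructor
    · rintro ⟨s', k', he, rfl⟩
      obtain ⟨-, rfl⟩ := (torusCell_inj hq).mp he
      rfl
    · rintro rfl; exact ⟨s, k, rfl, rfl⟩
  show sInf _ = _
  rw [hset, csInf_singleton]

lemma torusCell_mem_cells (s : ∀ i, ZMod (q i)) (k : Fin ℓ → Bool) :
    torusCell q s k ∈ (torusPre q).cells := ⟨s, k, rfl⟩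

lemma torusCell_mem_skel (hq : ∀ i, 3 ≤ q i) {s : ∀ i, ZMod (q i)} {k : Fin ℓ → Bool} {r : ℕ} :
    torusCell q s k ∈ (torusPre q).skel r ↔ torusRank k = r := by
  constructor
  · rintro ⟨-, hr⟩
    rw [← hr, rk_torusCell hq]
  · intro hr
    exact ⟨torusCell_mem_cells s k, by rw [rk_torusCell hq, hr]⟩

lemma mem_skel (hq : ∀ i, 3 ≤ q i) {x : Finset (∀ i, ZMod (q i))} {r : ℕ} :
    x ∈ (torusPre q).skel r ↔ ∃ s k, x = torusCell q s k ∧ torusRank k = r := by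
  constructor
  · rintro ⟨⟨s, k, rfl⟩, hr⟩
    exact ⟨s, k, rfl, by rw [← hr, rk_torusCell hq]⟩
  · rintro ⟨s, k, rfl, hr⟩
    exact (torusCell_mem_skel hq).mpr hr

end TorusAux
end TDL

namespace TDL
namespace TorusAux

variable {ℓ : ℕ} {q p : Fin ℓ → ℕ}

/-- The coordinatewise reduction map on nodes. -/
def red (p : Fin ℓ → ℕ) (s : ∀ i, ZMod (q i)) : ∀ i, ZMod (p i) :=
  fun i => ((s i).val : ZMod (p i))

lemma coordCast (hq : ∀ i, 3 ≤ q i) (hd : ∀ i, p i ∣ q i) (i : Fin ℓ)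
    (z : ZMod (q i)) (c : ℤ) :
    (((z + (c : ZMod (q i))).val : ZMod (p i))) = ((z.val : ZMod (p i))) + (c : ZMod (p i)) := by
  haveI : NeZero (q i) := ⟨by have := hq i; omega⟩
  rw [ZMod.natCast_val, ZMod.natCast_val, ← ZMod.castHom_apply (h := hd i),
    ← ZMod.castHom_apply (h := hd i), map_add, map_intCast]

lemma red_shift (hq : ∀ i, 3 ≤ q i) (hd : ∀ i, p i ∣ q i) (s : ∀ i, ZMod (q i))
    (c : Fin ℓ → ℤ) :
    red p (fun i => s i + ((c i : ℤ) : ZMod (q i))) = fun i => red p s i + (c i : ZMod (p i)) :=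
  funext fun i => coordCast hq hd i (s i) (c i)

lemma image_torusCell (hq : ∀ i, 3 ≤ q i) (hd : ∀ i, p i ∣ q i)
    (s : ∀ i, ZMod (q i)) (k : Fin ℓ → Bool) :
    (torusCell q s k).image (red p) = torusCell p (red p s) k := by
  ext a
  simp only [Finset.mem_image]
  constructor
  · rintro ⟨b, hb, rfl⟩
    obtain ⟨k', hk', hb⟩ := mem_torusCell.mp hb
    refine mem_torusCell.mpr ⟨k', hk', fun i => ?_⟩
    have : b i = s i + ((bz (k' i) : ℤ) : ZMod (q i)) := hb i
    show ((b i).val : ZMod (p i)) = _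
    rw [this, coordCast hq hd]
    rfl
  · intro ha
    obtain ⟨k', hk', ha⟩ := mem_torusCell.mp ha
    refine ⟨fun i => s i + ((bz (k' i) : ℤ) : ZMod (q i)),
      mem_torusCell.mpr ⟨k', hk', fun i => rfl⟩, funext fun i => ?_⟩
    show (((s i + _).val : ZMod (p i))) = a i
    rw [coordCast hq hd, ha i]
    rfl

lemma red_surjective (hq : ∀ i, 3 ≤ q i) (hp : ∀ i, 3 ≤ p i) (hd : ∀ i, p i ∣ q i)
    (t : ∀ i, ZMod (p i)) :
    ∃ s : ∀ i, ZMod (q i), red p s = t := by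
  refine ⟨fun i => ((t i).val : ZMod (q i)), funext fun i => ?_⟩
  haveI : NeZero (q i) := ⟨by have := hq i; omega⟩
  haveI : NeZero (p i) := ⟨by have := hp i; omega⟩
  have hlt : (t i).val < q i :=
    lt_of_lt_of_le (ZMod.val_lt _) (Nat.le_of_dvd (by have := hq i; omega) (hd i))
  show ((((t i).val : ZMod (q i))).val : ZMod (p i)) = t i
  rw [ZMod.val_cast_of_lt hlt, ZMod.natCast_val, ZMod.cast_id]

/-- Cancellation: two integer shifts of the same point that agree after reduction agree,
provided the shifts differ by less than `p i`. -/
lemma shift_cancel (hq : ∀ i, 3 ≤ q i) (hp : ∀ i, 3 ≤ p i) (hd : ∀ i, p i ∣ q i)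
    {s t₁ t₂ : ∀ i, ZMod (q i)} {c d : Fin ℓ → ℤ}
    (h1 : ∀ i, t₁ i = s i + (c i : ZMod (q i))) (h2 : ∀ i, t₂ i = s i + (d i : ZMod (q i)))
    (hcd : ∀ i, |c i - d i| < p i) (h : red p t₁ = red p t₂) : t₁ = t₂ := by
  funext i
  have e1 : red p t₁ i = red p s i + (c i : ZMod (p i)) := by
    show ((t₁ i).val : ZMod (p i)) = _
    rw [h1 i, coordCast hq hd]; rfl
  have e2 : red p t₂ i = red p s i + (d i : ZMod (p i)) := by
    show ((t₂ i).val : ZMod (p i)) = _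
    rw [h2 i, coordCast hq hd]; rfl
  have : (c i : ZMod (p i)) = (d i : ZMod (p i)) := by
    have := congrFun h i
    rw [e1, e2] at this
    exact add_left_cancel this
  have hcd' : c i = d i := intCast_inj this (hcd i)
  rw [h1 i, h2 i, hcd']

end TorusAux
end TDL

namespace TDL
namespace TorusAux

variable {ℓ : ℕ} {q p : Fin ℓ → ℕ}

/-- Integer shift of a node. -/
def shift (s : ∀ i, ZMod (q i)) (c : Fin ℓ → ℤ) : ∀ i, ZMod (q i) :=
  fun i => s i + (c i : ZMod (q i))

lemma shift_apply (s : ∀ i, ZMod (q i)) (c : Fin ℓ → ℤ) (i : Fin ℓ) :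
    shift s c i = s i + (c i : ZMod (q i)) := rfl

lemma red_coord (hq : ∀ i, 3 ≤ q i) (hd : ∀ i, p i ∣ q i) {s t : ∀ i, ZMod (q i)}
    {c : ℤ} {i : Fin ℓ} (h : s i = t i + (c : ZMod (q i))) :
    red p s i = red p t i + (c : ZMod (p i)) := by
  show ((s i).val : ZMod (p i)) = _
  rw [h, coordCast hq hd]
  rfl

lemma red_subset (hq : ∀ i, 3 ≤ q i) (hp : ∀ i, 3 ≤ p i) (hd : ∀ i, p i ∣ q i)
    {s t : ∀ i, ZMod (q i)} {k m : Fin ℓ → Bool} (h : torusCell q s k ⊆ torusCell q t m) :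
    torusCell p (red p s) k ⊆ torusCell p (red p t) m := by
  obtain ⟨δ, h1, h2, h3⟩ := (torusCell_subset hq).mp h
  exact (torusCell_subset hp).mpr ⟨δ, h1, h2, fun i => red_coord hq hd (h3 i)⟩

lemma abs_small {n : ℕ} (hn : 3 ≤ n) {x : ℤ} (h1 : -2 ≤ x) (h2 : x ≤ 2) : |x| < n := by
  rw [abs_lt]
  constructor <;> omega

lemma torus_covering (hq : ∀ i, 3 ≤ q i) (hp : ∀ i, 3 ≤ p i) (hd : ∀ i, p i ∣ q i) :
    IsCovering (torusPre q) (torusPre p) (fun x => x.image (red p)) := by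
  constructor
  · rintro x ⟨s, k, rfl⟩
    simp only [image_torusCell hq hd]
    exact ⟨_, k, rfl⟩
  · rintro x ⟨s, k, rfl⟩
    obtain ⟨s', hs'⟩ := red_surjective hq hp hd s
    exact ⟨torusCell q s' k, ⟨s', k, rfl⟩, by simp only [image_torusCell hq hd, hs']⟩
  · rintro x ⟨s, k, rfl⟩
    simp only [image_torusCell hq hd, rk_torusCell hp, rk_torusCell hq]
  · rintro x ⟨s, k, rfl⟩ N
    cases N with
    | adj r₁ r₂ =>
      simp only [PreCC.nbhd, image_torusCell hq hd]
      by_cases hx : torusRank k = r₁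
      · have hsx : torusCell q s k ∈ (torusPre q).skel r₁ := (torusCell_mem_skel hq).mpr hx
        have hsx' : torusCell p (red p s) k ∈ (torusPre p).skel r₁ :=
          (torusCell_mem_skel hp).mpr hx
        refine ⟨?_, ?_, ?_⟩
        · -- MapsTo
          intro y hy
          simp only [Set.mem_setOf_eq] at hy ⊢
          obtain ⟨-, hy1, z, hz, hxz, hyz⟩ := hy
          obtain ⟨t, m, rfl, hm⟩ := (mem_skel hq).mp hy1
          obtain ⟨w, n, rfl, hn⟩ := (mem_skel hq).mp hz
          simp only [image_torusCell hq hd]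
          exact ⟨hsx', (torusCell_mem_skel hp).mpr hm, torusCell p (red p w) n,
            (torusCell_mem_skel hp).mpr hn, red_subset hq hp hd hxz, red_subset hq hp hd hyz⟩
        · -- InjOn
          intro y1 hy1 y2 hy2 he
          simp only [Set.mem_setOf_eq] at hy1 hy2
          obtain ⟨-, hy1s, z1, hz1, hxz1, hyz1⟩ := hy1
          obtain ⟨-, hy2s, z2, hz2, hxz2, hyz2⟩ := hy2
          obtain ⟨t1, m1, rfl, hm1⟩ := (mem_skel hq).mp hy1s
          obtain ⟨w1, n1, rfl, hn1⟩ := (mem_skel hq).mp hz1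
          obtain ⟨t2, m2, rfl, hm2⟩ := (mem_skel hq).mp hy2s
          obtain ⟨w2, n2, rfl, hn2⟩ := (mem_skel hq).mp hz2
          simp only [image_torusCell hq hd] at he
          obtain ⟨hred, rfl⟩ := (torusCell_inj hp).mp he
          obtain ⟨δ1, -, -, hδ1⟩ := (torusCell_subset hq).mp hxz1
          obtain ⟨ε1, -, -, hε1⟩ := (torusCell_subset hq).mp hyz1
          obtain ⟨δ2, -, -, hδ2⟩ := (torusCell_subset hq).mp hxz2
          obtain ⟨ε2, -, -, hε2⟩ := (torusCell_subset hq).mp hyz2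
          have ht : t1 = t2 := by
            refine shift_cancel hq hp hd (s := s) (c := fun i => bz (ε1 i) - bz (δ1 i))
              (d := fun i => bz (ε2 i) - bz (δ2 i)) ?_ ?_ ?_ hred
            · intro i; push_cast; linear_combination hε1 i - hδ1 i
            · intro i; push_cast; linear_combination hε2 i - hδ2 i
            · intro i
              show |bz (ε1 i) - bz (δ1 i) - (bz (ε2 i) - bz (δ2 i))| < p i
              refine abs_small (hp i) ?_ ?_ <;>
                (rcases bz_cases (ε1 i) with h1 | h1 <;> rcases bz_cases (δ1 i) with h2 | h2 <;>
                 rcases bz_cases (ε2 i) with h3 | h3 <;> rcases bz_cases (δ2 i) with h4 | h4 <;>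
                 omega)
          rw [ht]
        · -- SurjOn
          intro y hy
          simp only [Set.mem_setOf_eq] at hy
          obtain ⟨-, hy1, z, hz, hxz, hyz⟩ := hy
          obtain ⟨u, m, rfl, hm⟩ := (mem_skel hp).mp hy1
          obtain ⟨v, n, rfl, hn⟩ := (mem_skel hp).mp hz
          obtain ⟨δ, hδ1, hδ2, hδ3⟩ := (torusCell_subset hp).mp hxz
          obtain ⟨ε, hε1, hε2, hε3⟩ := (torusCell_subset hp).mp hyz
          have hredw : red p (shift s fun i => -(bz (δ i))) = v := by
            funext i
            rw [red_coord hq hd (shift_apply s _ i), hδ3 i]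
            push_cast
            ring
          have hredt : red p (shift s fun i => bz (ε i) - bz (δ i)) = u := by
            funext i
            rw [red_coord hq hd (shift_apply s _ i), hδ3 i, hε3 i]
            push_cast
            ring
          have hsub1 : torusCell q s k ⊆ torusCell q (shift s fun i => -(bz (δ i))) n :=
            (torusCell_subset hq).mpr ⟨δ, hδ1, hδ2, fun i => by
              rw [shift_apply]; push_cast; ring⟩
          have hsub2 : torusCell q (shift s fun i => bz (ε i) - bz (δ i)) m
              ⊆ torusCell q (shift s fun i => -(bz (δ i))) n :=
            (torusCell_subset hq).mpr ⟨ε, hε1, hε2, fun i => by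
              rw [shift_apply, shift_apply]; push_cast; ring⟩
          refine ⟨torusCell q (shift s fun i => bz (ε i) - bz (δ i)) m, ?_, ?_⟩
          · exact ⟨hsx, (torusCell_mem_skel hq).mpr hm,
              torusCell q (shift s fun i => -(bz (δ i))) n,
              (torusCell_mem_skel hq).mpr hn, hsub1, hsub2⟩
          · simp only [image_torusCell hq hd, hredt]
      · have hA : {y | torusCell q s k ∈ (torusPre q).skel r₁ ∧ y ∈ (torusPre q).skel r₁ ∧
            ∃ z ∈ (torusPre q).skel r₂, torusCell q s k ⊆ z ∧ y ⊆ z} = ∅ := by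
          ext y
          simp only [Set.mem_setOf_eq, Set.mem_empty_iff_false, iff_false]
          rintro ⟨h1, -⟩
          exact hx ((torusCell_mem_skel hq).mp h1)
        have hB : {y | torusCell p (red p s) k ∈ (torusPre p).skel r₁ ∧
            y ∈ (torusPre p).skel r₁ ∧
            ∃ z ∈ (torusPre p).skel r₂, torusCell p (red p s) k ⊆ z ∧ y ⊆ z} = ∅ := by
          ext y
          simp only [Set.mem_setOf_eq, Set.mem_empty_iff_false, iff_false]
          rintro ⟨h1, -⟩
          exact hx ((torusCell_mem_skel hp).mp h1)
        rw [hA, hB]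
        exact Set.bijOn_empty _
    | coadj r₁ r₂ =>
      simp only [PreCC.nbhd, image_torusCell hq hd]
      by_cases hx : torusRank k = r₁
      · have hsx : torusCell q s k ∈ (torusPre q).skel r₁ := (torusCell_mem_skel hq).mpr hx
        have hsx' : torusCell p (red p s) k ∈ (torusPre p).skel r₁ :=
          (torusCell_mem_skel hp).mpr hx
        refine ⟨?_, ?_, ?_⟩
        · intro y hy
          simp only [Set.mem_setOf_eq] at hy ⊢
          obtain ⟨-, hy1, z, hz, hxz, hyz⟩ := hy
          obtain ⟨t, m, rfl, hm⟩ := (mem_skel hq).mp hy1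
          obtain ⟨w, n, rfl, hn⟩ := (mem_skel hq).mp hz
          simp only [image_torusCell hq hd]
          exact ⟨hsx', (torusCell_mem_skel hp).mpr hm, torusCell p (red p w) n,
            (torusCell_mem_skel hp).mpr hn, red_subset hq hp hd hxz, red_subset hq hp hd hyz⟩
        · intro y1 hy1 y2 hy2 he
          simp only [Set.mem_setOf_eq] at hy1 hy2
          obtain ⟨-, hy1s, z1, hz1, hxz1, hyz1⟩ := hy1
          obtain ⟨-, hy2s, z2, hz2, hxz2, hyz2⟩ := hy2
          obtain ⟨t1, m1, rfl, hm1⟩ := (mem_skel hq).mp hy1s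
          obtain ⟨w1, n1, rfl, hn1⟩ := (mem_skel hq).mp hz1
          obtain ⟨t2, m2, rfl, hm2⟩ := (mem_skel hq).mp hy2s
          obtain ⟨w2, n2, rfl, hn2⟩ := (mem_skel hq).mp hz2
          simp only [image_torusCell hq hd] at he
          obtain ⟨hred, rfl⟩ := (torusCell_inj hp).mp he
          obtain ⟨δ1, -, -, hδ1⟩ := (torusCell_subset hq).mp hxz1
          obtain ⟨ε1, -, -, hε1⟩ := (torusCell_subset hq).mp hyz1
          obtain ⟨δ2, -, -, hδ2⟩ := (torusCell_subset hq).mp hxz2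
          obtain ⟨ε2, -, -, hε2⟩ := (torusCell_subset hq).mp hyz2
          have ht : t1 = t2 := by
            refine shift_cancel hq hp hd (s := s) (c := fun i => bz (δ1 i) - bz (ε1 i))
              (d := fun i => bz (δ2 i) - bz (ε2 i)) ?_ ?_ ?_ hred
            · intro i; push_cast; linear_combination hδ1 i - hε1 i
            · intro i; push_cast; linear_combination hδ2 i - hε2 i
            · intro i
              show |bz (δ1 i) - bz (ε1 i) - (bz (δ2 i) - bz (ε2 i))| < p i
              refine abs_small (hp i) ?_ ?_ <;>
                (rcases bz_cases (ε1 i) with h1 | h1 <;> rcases bz_cases (δ1 i) with h2 | h2 <;>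
                 rcases bz_cases (ε2 i) with h3 | h3 <;> rcases bz_cases (δ2 i) with h4 | h4 <;>
                 omega)
          rw [ht]
        · intro y hy
          simp only [Set.mem_setOf_eq] at hy
          obtain ⟨-, hy1, z, hz, hxz, hyz⟩ := hy
          obtain ⟨u, m, rfl, hm⟩ := (mem_skel hp).mp hy1
          obtain ⟨v, n, rfl, hn⟩ := (mem_skel hp).mp hz
          obtain ⟨δ, hδ1, hδ2, hδ3⟩ := (torusCell_subset hp).mp hxz
          obtain ⟨ε, hε1, hε2, hε3⟩ := (torusCell_subset hp).mp hyz
          have hredt : red p (shift s fun i => bz (δ i) - bz (ε i)) = u := by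
            funext i
            rw [red_coord hq hd (shift_apply s _ i)]
            push_cast
            linear_combination hε3 i - hδ3 i
          have hsub1 : torusCell q (shift s fun i => bz (δ i)) n ⊆ torusCell q s k :=
            (torusCell_subset hq).mpr ⟨δ, hδ1, hδ2, fun i => by rw [shift_apply]⟩
          have hsub2 : torusCell q (shift s fun i => bz (δ i)) n
              ⊆ torusCell q (shift s fun i => bz (δ i) - bz (ε i)) m :=
            (torusCell_subset hq).mpr ⟨ε, hε1, hε2, fun i => by
              rw [shift_apply, shift_apply]; push_cast; ring⟩
          refine ⟨torusCell q (shift s fun i => bz (δ i) - bz (ε i)) m, ?_, ?_⟩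
          · exact ⟨hsx, (torusCell_mem_skel hq).mpr hm,
              torusCell q (shift s fun i => bz (δ i)) n,
              (torusCell_mem_skel hq).mpr hn, hsub1, hsub2⟩
          · simp only [image_torusCell hq hd, hredt]
      · have hA : {y | torusCell q s k ∈ (torusPre q).skel r₁ ∧ y ∈ (torusPre q).skel r₁ ∧
            ∃ z ∈ (torusPre q).skel r₂, z ⊆ torusCell q s k ∧ z ⊆ y} = ∅ := by
          ext y
          simp only [Set.mem_setOf_eq, Set.mem_empty_iff_false, iff_false]
          rintro ⟨h1, -⟩
          exact hx ((torusCell_mem_skel hq).mp h1)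
        have hB : {y | torusCell p (red p s) k ∈ (torusPre p).skel r₁ ∧
            y ∈ (torusPre p).skel r₁ ∧
            ∃ z ∈ (torusPre p).skel r₂, z ⊆ torusCell p (red p s) k ∧ z ⊆ y} = ∅ := by
          ext y
          simp only [Set.mem_setOf_eq, Set.mem_empty_iff_false, iff_false]
          rintro ⟨h1, -⟩
          exact hx ((torusCell_mem_skel hp).mp h1)
        rw [hA, hB]
        exact Set.bijOn_empty _
    | inc r₁ r₂ =>
      simp only [PreCC.nbhd, image_torusCell hq hd]
      by_cases hx : torusRank k = r₁
      · have hsx : torusCell q s k ∈ (torusPre q).skel r₁ := (torusCell_mem_skel hq).mpr hx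
        have hsx' : torusCell p (red p s) k ∈ (torusPre p).skel r₁ :=
          (torusCell_mem_skel hp).mpr hx
        refine ⟨?_, ?_, ?_⟩
        · intro y hy
          simp only [Set.mem_setOf_eq] at hy ⊢
          obtain ⟨-, hy1, hxy⟩ := hy
          obtain ⟨t, m, rfl, hm⟩ := (mem_skel hq).mp hy1
          simp only [image_torusCell hq hd]
          exact ⟨hsx', (torusCell_mem_skel hp).mpr hm, red_subset hq hp hd hxy⟩
        · intro y1 hy1 y2 hy2 he
          simp only [Set.mem_setOf_eq] at hy1 hy2
          obtain ⟨-, hy1s, hxy1⟩ := hy1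
          obtain ⟨-, hy2s, hxy2⟩ := hy2
          obtain ⟨t1, m1, rfl, hm1⟩ := (mem_skel hq).mp hy1s
          obtain ⟨t2, m2, rfl, hm2⟩ := (mem_skel hq).mp hy2s
          simp only [image_torusCell hq hd] at he
          obtain ⟨hred, rfl⟩ := (torusCell_inj hp).mp he
          obtain ⟨δ1, -, -, hδ1⟩ := (torusCell_subset hq).mp hxy1
          obtain ⟨δ2, -, -, hδ2⟩ := (torusCell_subset hq).mp hxy2
          have ht : t1 = t2 := by
            refine shift_cancel hq hp hd (s := s) (c := fun i => -(bz (δ1 i)))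
              (d := fun i => -(bz (δ2 i))) ?_ ?_ ?_ hred
            · intro i; push_cast; linear_combination -(hδ1 i)
            · intro i; push_cast; linear_combination -(hδ2 i)
            · intro i
              show |-(bz (δ1 i)) - -(bz (δ2 i))| < p i
              refine abs_small (hp i) ?_ ?_ <;>
                (rcases bz_cases (δ1 i) with h1 | h1 <;> rcases bz_cases (δ2 i) with h2 | h2 <;>
                 omega)
          rw [ht]
        · intro y hy
          simp only [Set.mem_setOf_eq] at hy
          obtain ⟨-, hy1, hxy⟩ := hy
          obtain ⟨u, m, rfl, hm⟩ := (mem_skel hp).mp hy1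
          obtain ⟨δ, hδ1, hδ2, hδ3⟩ := (torusCell_subset hp).mp hxy
          have hredt : red p (shift s fun i => -(bz (δ i))) = u := by
            funext i
            rw [red_coord hq hd (shift_apply s _ i)]
            push_cast
            linear_combination hδ3 i
          have hsub : torusCell q s k ⊆ torusCell q (shift s fun i => -(bz (δ i))) m :=
            (torusCell_subset hq).mpr ⟨δ, hδ1, hδ2, fun i => by
              rw [shift_apply]; push_cast; ring⟩
          refine ⟨torusCell q (shift s fun i => -(bz (δ i))) m, ?_, ?_⟩
          · exact ⟨hsx, (torusCell_mem_skel hq).mpr hm, hsub⟩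
          · simp only [image_torusCell hq hd, hredt]
      · have hA : {y | torusCell q s k ∈ (torusPre q).skel r₁ ∧ y ∈ (torusPre q).skel r₂ ∧
            torusCell q s k ⊆ y} = ∅ := by
          ext y
          simp only [Set.mem_setOf_eq, Set.mem_empty_iff_false, iff_false]
          rintro ⟨h1, -⟩
          exact hx ((torusCell_mem_skel hq).mp h1)
        have hB : {y | torusCell p (red p s) k ∈ (torusPre p).skel r₁ ∧
            y ∈ (torusPre p).skel r₂ ∧ torusCell p (red p s) k ⊆ y} = ∅ := by
          ext y
          simp only [Set.mem_setOf_eq, Set.mem_empty_iff_false, iff_false]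
          rintro ⟨h1, -⟩
          exact hx ((torusCell_mem_skel hp).mp h1)
        rw [hA, hB]
        exact Set.bijOn_empty _
    | coinc r₁ r₂ =>
      simp only [PreCC.nbhd, image_torusCell hq hd]
      by_cases hx : torusRank k = r₁
      · have hsx : torusCell q s k ∈ (torusPre q).skel r₁ := (torusCell_mem_skel hq).mpr hx
        have hsx' : torusCell p (red p s) k ∈ (torusPre p).skel r₁ :=
          (torusCell_mem_skel hp).mpr hx
        refine ⟨?_, ?_, ?_⟩
        · intro y hy
          simp only [Set.mem_setOf_eq] at hy ⊢
          obtain ⟨-, hy1, hxy⟩ := hy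
          obtain ⟨t, m, rfl, hm⟩ := (mem_skel hq).mp hy1
          simp only [image_torusCell hq hd]
          exact ⟨hsx', (torusCell_mem_skel hp).mpr hm, red_subset hq hp hd hxy⟩
        · intro y1 hy1 y2 hy2 he
          simp only [Set.mem_setOf_eq] at hy1 hy2
          obtain ⟨-, hy1s, hxy1⟩ := hy1
          obtain ⟨-, hy2s, hxy2⟩ := hy2
          obtain ⟨t1, m1, rfl, hm1⟩ := (mem_skel hq).mp hy1s
          obtain ⟨t2, m2, rfl, hm2⟩ := (mem_skel hq).mp hy2s
          simp only [image_torusCell hq hd] at he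
          obtain ⟨hred, rfl⟩ := (torusCell_inj hp).mp he
          obtain ⟨δ1, -, -, hδ1⟩ := (torusCell_subset hq).mp hxy1
          obtain ⟨δ2, -, -, hδ2⟩ := (torusCell_subset hq).mp hxy2
          have ht : t1 = t2 := by
            refine shift_cancel hq hp hd (s := s) (c := fun i => bz (δ1 i))
              (d := fun i => bz (δ2 i)) ?_ ?_ ?_ hred
            · intro i; push_cast; linear_combination hδ1 i
            · intro i; push_cast; linear_combination hδ2 i
            · intro i
              show |bz (δ1 i) - bz (δ2 i)| < p i
              refine abs_small (hp i) ?_ ?_ <;>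
                (rcases bz_cases (δ1 i) with h1 | h1 <;> rcases bz_cases (δ2 i) with h2 | h2 <;>
                 omega)
          rw [ht]
        · intro y hy
          simp only [Set.mem_setOf_eq] at hy
          obtain ⟨-, hy1, hxy⟩ := hy
          obtain ⟨u, m, rfl, hm⟩ := (mem_skel hp).mp hy1
          obtain ⟨δ, hδ1, hδ2, hδ3⟩ := (torusCell_subset hp).mp hxy
          have hredt : red p (shift s fun i => bz (δ i)) = u := by
            funext i
            rw [red_coord hq hd (shift_apply s _ i)]
            push_cast
            linear_combination -(hδ3 i)
          have hsub : torusCell q (shift s fun i => bz (δ i)) m ⊆ torusCell q s k :=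
            (torusCell_subset hq).mpr ⟨δ, hδ1, hδ2, fun i => by rw [shift_apply]⟩
          refine ⟨torusCell q (shift s fun i => bz (δ i)) m, ?_, ?_⟩
          · exact ⟨hsx, (torusCell_mem_skel hq).mpr hm, hsub⟩
          · simp only [image_torusCell hq hd, hredt]
      · have hA : {y | torusCell q s k ∈ (torusPre q).skel r₁ ∧ y ∈ (torusPre q).skel r₂ ∧
            y ⊆ torusCell q s k} = ∅ := by
          ext y
          simp only [Set.mem_setOf_eq, Set.mem_empty_iff_false, iff_false]
          rintro ⟨h1, -⟩
          exact hx ((torusCell_mem_skel hq).mp h1)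
        have hB : {y | torusCell p (red p s) k ∈ (torusPre p).skel r₁ ∧
            y ∈ (torusPre p).skel r₂ ∧ y ⊆ torusCell p (red p s) k} = ∅ := by
          ext y
          simp only [Set.mem_setOf_eq, Set.mem_empty_iff_false, iff_false]
          rintro ⟨h1, -⟩
          exact hx ((torusCell_mem_skel hp).mp h1)
        rw [hA, hB]
        exact Set.bijOn_empty _

end TorusAux
end TDL

namespace TDL

/-- For tori with `p j, p' j ≥ 3`, the maps on cells induced by coordinatewise
reduction of nodes modulo `(p₁,…,p_ℓ)` resp. `(p'₁,…,p'_ℓ)` are CC coverings of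
`T_{p₁,…,p_ℓ}` resp. `T_{p'₁,…,p'_ℓ}` by `T_{p₁p'₁,…,p_ℓp'_ℓ}`. -/
theorem torus_coverings {ℓ : ℕ} (p p' : Fin ℓ → ℕ)
    (hp : ∀ j, 3 ≤ p j) (hp' : ∀ j, 3 ≤ p' j) :
    IsCovering (torusPre fun i => p i * p' i) (torusPre p)
      (fun x => x.image fun s i => ((s i).val : ZMod (p i))) ∧
    IsCovering (torusPre fun i => p i * p' i) (torusPre p')
      (fun x => x.image fun s i => ((s i).val : ZMod (p' i))) := by
  constructor
  · exact TorusAux.torus_covering (q := fun i => p i * p' i) (p := p)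
      (fun i => le_trans (hp i) (Nat.le_mul_of_pos_right _ (by have := hp' i; omega)))
      hp (fun i => ⟨p' i, rfl⟩)
  · exact TorusAux.torus_covering (q := fun i => p i * p' i) (p := p')
      (fun i => le_trans (hp' i) (Nat.le_mul_of_pos_left _ (by have := hp i; omega)))
      hp' (fun i => Dvd.intro_left (p i) rfl)

end TDL
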